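/- Every finite nonempty simple graph G without isolated vertices satisfies χ'_CF(G) ≤ 3⌈log₂ χ(G)⌉ + 1, where χ(G) denotes the chromatic number of G. -/

import Mathlib

open SimpleGraph

/-- An edge `e` is *satisfied* by the colouring `c` of (the edges of) the graph `H` if some
colour is assigned by `c` to exactly one edge of `H` incident to an endpoint of `e`. -/
def CFSatisfies {V : Type*} {k : ℕ} (H : SimpleGraph V) (c : Sym2 V → Fin k) (e : Sym2 V) :
    Prop :=
  ∃ col : Fin k, ∃! f : Sym2 V, f ∈ H.edgeSet ∧ (∃ x ∈ e, x ∈ f) ∧ c f = col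

/-- The conflict-free chromatic index `χ'_CF(G)`: the least `k` such that `G` admits an edge
colouring with `k` colours in which every edge of `G` is satisfied. -/
noncomputable def cfChromIndex {V : Type*} (G : SimpleGraph V) : ℕ :=
  sInf {k | ∃ c : Sym2 V → Fin k, ∀ e ∈ G.edgeSet, CFSatisfies G c e}

/-- The parameter `χ'_sCF(G)`: the least `k` for which some subgraph `H` of `G` admits an edge
colouring with `k` colours such that every edge of `G` is satisfied. -/
noncomputable def scfChromIndex {V : Type*} (G : SimpleGraph V) : ℕ :=
  sInf {k | ∃ H : SimpleGraph V, H ≤ G ∧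
    ∃ c : Sym2 V → Fin k, ∀ e ∈ G.edgeSet, CFSatisfies H c e}

namespace CFProof

open Finset

open scoped Classical

variable {V : Type*}

/-- the fiber (star) of a centre `x` under the assignment `g`. -/
noncomputable def fibF [Fintype V] (g : V → Option V) (x : V) : Finset V :=
  Finset.univ.filter (fun y => g y = some x)

lemma mem_fibF [Fintype V] {g : V → Option V} {x y : V} :
    y ∈ fibF g x ↔ g y = some x := by
  simp [fibF]

noncomputable def sp1 [Fintype V] [Nonempty V] [LinearOrder V]
    (g : V → Option V) (x : V) : V :=
  if h : (fibF g x).Nonempty then (fibF g x).min' h else Classical.arbitrary V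

noncomputable def sp2 [Fintype V] [Nonempty V] [LinearOrder V]
    (g : V → Option V) (x : V) : V :=
  if h : ((fibF g x).erase (sp1 g x)).Nonempty then ((fibF g x).erase (sp1 g x)).min' h
  else sp1 g x

lemma sp1_mem [Fintype V] [Nonempty V] [LinearOrder V] {g : V → Option V} {x : V}
    (h : (fibF g x).Nonempty) : sp1 g x ∈ fibF g x := by
  rw [sp1, dif_pos h]; exact Finset.min'_mem _ h

lemma sp2_spec [Fintype V] [Nonempty V] [LinearOrder V] {g : V → Option V} {x : V}
    (h : 2 ≤ (fibF g x).card) : sp2 g x ∈ fibF g x ∧ sp2 g x ≠ sp1 g x := by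
  have hne : (fibF g x).Nonempty := Finset.card_pos.1 (by omega)
  have hmem := sp1_mem hne
  have hcard : 1 ≤ ((fibF g x).erase (sp1 g x)).card := by
    rw [Finset.card_erase_of_mem hmem]; omega
  have hne2 : ((fibF g x).erase (sp1 g x)).Nonempty := Finset.card_pos.1 hcard
  have hmem2 : sp2 g x ∈ (fibF g x).erase (sp1 g x) := by
    rw [sp2, dif_pos hne2]; exact Finset.min'_mem _ _
  exact ⟨Finset.mem_of_mem_erase hmem2, (Finset.mem_erase.1 hmem2).1⟩

lemma eq_sp1_of_card_one [Fintype V] [Nonempty V] [LinearOrder V] {g : V → Option V} {x : V}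
    (h : (fibF g x).card = 1) {y : V} (hy : y ∈ fibF g x) : y = sp1 g x := by
  obtain ⟨b, hb⟩ := Finset.card_eq_one.1 h
  have h1 : y = b := by rw [hb] at hy; simpa using hy
  have h2 : sp1 g x = b := by
    have := sp1_mem (g := g) (x := x) (by rw [hb]; exact ⟨b, by simp⟩)
    rw [hb] at this; simpa using this
  rw [h1, h2]

lemma eq_sp2_of_card_two [Fintype V] [Nonempty V] [LinearOrder V] {g : V → Option V} {x : V}
    (h : (fibF g x).card = 2) {y : V} (hy : y ∈ fibF g x) (hne : y ≠ sp1 g x) :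
    y = sp2 g x := by
  have hmem := sp1_mem (g := g) (x := x) (Finset.card_pos.1 (by omega))
  have hcard : ((fibF g x).erase (sp1 g x)).card = 1 := by
    rw [Finset.card_erase_of_mem hmem, h]
  obtain ⟨b, hb⟩ := Finset.card_eq_one.1 hcard
  have h1 : y = b := by
    have : y ∈ (fibF g x).erase (sp1 g x) := Finset.mem_erase.2 ⟨hne, hy⟩
    rw [hb] at this; simpa using this
  have h2 : sp2 g x = b := by
    have hmem2 : sp2 g x ∈ (fibF g x).erase (sp1 g x) := by
      obtain ⟨hm, hn⟩ := sp2_spec (g := g) (x := x) (by omega)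
      exact Finset.mem_erase.2 ⟨hn, hm⟩
    rw [hb] at hmem2; simpa using hmem2
  rw [h1, h2]

/-- The colour of the leaf `y` in the star centred at `x`. -/
noncomputable def colOf [Fintype V] [Nonempty V] [LinearOrder V]
    (g : V → Option V) (x y : V) : Fin 3 :=
  if (fibF g x).card = 2 then (if y = sp1 g x then 1 else 2)
  else if y = sp1 g x then 0 else if y = sp2 g x then 1 else 2

noncomputable def colL [Fintype V] [Nonempty V] [LinearOrder V]
    (g : V → Option V) (y : V) : Fin 3 :=
  (g y).elim 0 (fun x => colOf g x y)

lemma colL_eq [Fintype V] [Nonempty V] [LinearOrder V] {g : V → Option V} {y x : V}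
    (h : g y = some x) : colL g y = colOf g x y := by
  rw [colL, h]
  rfl

/-- In a nonempty star, for any forbidden colour `γ` (which must be nonzero if the star is a
singleton) there is a colour `x0 ≠ γ` used by exactly one leaf of the star. -/
lemma fiber_unique [Fintype V] [Nonempty V] [LinearOrder V] (g : V → Option V) (u : V)
    (hne : (fibF g u).Nonempty) (γ : Fin 3) (hγ : (fibF g u).card = 1 → γ ≠ 0) :
    ∃ x0 : Fin 3, x0 ≠ γ ∧ ∃! y : V, y ∈ fibF g u ∧ colOf g u y = x0 := by
  have hpos : 1 ≤ (fibF g u).card := Finset.card_pos.2 hne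
  by_cases h1 : (fibF g u).card = 1
  · refine ⟨0, Ne.symm (hγ h1), sp1 g u, ⟨sp1_mem hne, ?_⟩, ?_⟩
    · rw [colOf, if_neg (by omega), if_pos rfl]
    · rintro y ⟨hy, -⟩; exact eq_sp1_of_card_one h1 hy
  by_cases h2 : (fibF g u).card = 2
  · obtain ⟨hsp2mem, hsp2ne⟩ := sp2_spec (g := g) (x := u) (by omega)
    by_cases hγ1 : γ = 1
    · refine ⟨2, by rw [hγ1]; decide, sp2 g u, ⟨hsp2mem, ?_⟩, ?_⟩
      · rw [colOf, if_pos h2, if_neg hsp2ne]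
      · rintro y ⟨hy, hcol⟩
        rw [colOf, if_pos h2] at hcol
        by_cases hys : y = sp1 g u
        · rw [if_pos hys] at hcol; exact absurd hcol (by decide)
        · exact eq_sp2_of_card_two h2 hy hys
    · refine ⟨1, Ne.symm hγ1, sp1 g u, ⟨sp1_mem hne, ?_⟩, ?_⟩
      · rw [colOf, if_pos h2, if_pos rfl]
      · rintro y ⟨hy, hcol⟩
        rw [colOf, if_pos h2] at hcol
        by_cases hys : y = sp1 g u
        · exact hys
        · rw [if_neg hys] at hcol; exact absurd hcol (by decide)
  · obtain ⟨hsp2mem, hsp2ne⟩ := sp2_spec (g := g) (x := u) (by omega)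
    by_cases hγ0 : γ = 0
    · refine ⟨1, by rw [hγ0]; decide, sp2 g u, ⟨hsp2mem, ?_⟩, ?_⟩
      · rw [colOf, if_neg h2, if_neg hsp2ne, if_pos rfl]
      · rintro y ⟨hy, hcol⟩
        rw [colOf, if_neg h2] at hcol
        by_cases hys : y = sp1 g u
        · rw [if_pos hys] at hcol; exact absurd hcol (by decide)
        · rw [if_neg hys] at hcol
          by_cases hys2 : y = sp2 g u
          · exact hys2
          · rw [if_neg hys2] at hcol; exact absurd hcol (by decide)
    · refine ⟨0, Ne.symm hγ0, sp1 g u, ⟨sp1_mem hne, ?_⟩, ?_⟩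
      · rw [colOf, if_neg h2, if_pos rfl]
      · rintro y ⟨hy, hcol⟩
        rw [colOf, if_neg h2] at hcol
        by_cases hys : y = sp1 g u
        · exact hys
        · rw [if_neg hys] at hcol
          by_cases hys2 : y = sp2 g u
          · rw [if_pos hys2] at hcol; exact absurd hcol (by decide)
          · rw [if_neg hys2] at hcol; exact absurd hcol (by decide)

/-- Subgraph-conflict-free colouring of a bipartite graph with 3 colours:
there is a partial assignment of each "leaf" (a vertex with `p = false`) to an adjacent
centre, together with a 3-colouring of the resulting star forest, such that every edge of `B`
sees exactly one edge of some colour among the chosen edges incident to its endpoints. -/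
lemma bip [Fintype V] [Nonempty V] (B : SimpleGraph V) (p : V → Bool)
    (hp : ∀ u v, B.Adj u v → p u ≠ p v) :
    ∃ (a : V → Option V) (l : V → Fin 3),
      (∀ y x, a y = some x → B.Adj x y ∧ p y = false) ∧
      (∀ u v, B.Adj u v → p v = false →
        ∃ x0 : Fin 3, ∃! y : V,
          (∃ x, a y = some x ∧ (y = u ∨ y = v ∨ x = u ∨ x = v)) ∧ l y = x0) := by
  letI : LinearOrder V :=
    LinearOrder.lift' (Fintype.equivFin V) (Fintype.equivFin V).injective
  -- valid assignments
  have hex : ∃ g : V → Option V, (∀ y : V,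
      (∀ x, g y = some x → B.Adj x y ∧ p y = false) ∧
      (p y = false → (∃ x, B.Adj x y) → ∃ x, g y = some x)) := by
    refine ⟨fun y => if h : p y = false ∧ ∃ x, B.Adj x y then some h.2.choose else none,
      fun y => ⟨?_, ?_⟩⟩
    · intro x hx
      dsimp only at hx
      by_cases h : p y = false ∧ ∃ x, B.Adj x y
      · rw [dif_pos h] at hx
        obtain rfl : h.2.choose = x := by injection hx
        exact ⟨h.2.choose_spec, h.1⟩
      · rw [dif_neg h] at hx; exact absurd hx (by simp)
    · intro h1 h2
      dsimp only
      rw [dif_pos ⟨h1, h2⟩]; exact ⟨_, rfl⟩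
  -- minimize the number of singleton stars
  set S : Set ℕ := {n | ∃ g : V → Option V, (∀ y : V,
      (∀ x, g y = some x → B.Adj x y ∧ p y = false) ∧
      (p y = false → (∃ x, B.Adj x y) → ∃ x, g y = some x)) ∧
      (Finset.univ.filter (fun x => (fibF g x).card = 1)).card = n} with hSdef
  have hSne : S.Nonempty := ⟨_, hex.choose, hex.choose_spec, rfl⟩
  obtain ⟨g, hgV, hgm⟩ := Nat.sInf_mem hSne
  have hmin : ∀ g' : V → Option V, (∀ y : V,
      (∀ x, g' y = some x → B.Adj x y ∧ p y = false) ∧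
      (p y = false → (∃ x, B.Adj x y) → ∃ x, g' y = some x)) →
      sInf S ≤ (Finset.univ.filter (fun x => (fibF g' x).card = 1)).card :=
    fun g' h => Nat.sInf_le ⟨g', h, rfl⟩
  -- the stealing argument
  have steal : ∀ u v w : V, B.Adj u v → p v = false → g v = some w → w ≠ u →
      (fibF g u).card = 1 → (fibF g w).card = 2 := by
    intro u v w hadj hpv hgv hwu hcard
    by_contra hne2
    set g' : V → Option V := Function.update g v (some u) with hg'
    have hval' : ∀ y : V,
        (∀ x, g' y = some x → B.Adj x y ∧ p y = false) ∧
        (p y = false → (∃ x, B.Adj x y) → ∃ x, g' y = some x) := by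
      intro y
      by_cases hy : y = v
      · subst hy
        refine ⟨?_, ?_⟩
        · intro x hx
          rw [hg', Function.update_self] at hx
          obtain rfl : u = x := by injection hx
          exact ⟨hadj, hpv⟩
        · intro _ _
          exact ⟨u, by rw [hg', Function.update_self]⟩
      · have heq : g' y = g y := Function.update_of_ne hy _ _
        refine ⟨?_, ?_⟩
        · intro x hx; rw [heq] at hx; exact (hgV y).1 x hx
        · intro h1 h2
          obtain ⟨x, hx⟩ := (hgV y).2 h1 h2
          exact ⟨x, by rw [heq]; exact hx⟩
    have hvu : v ∉ fibF g u := by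
      rw [mem_fibF, hgv]
      intro hc
      exact hwu (by injection hc)
    have hvw : v ∈ fibF g w := mem_fibF.2 hgv
    have hfu' : fibF g' u = insert v (fibF g u) := by
      ext y
      rw [mem_fibF, Finset.mem_insert, mem_fibF]
      by_cases hy : y = v
      · subst hy; rw [hg', Function.update_self]; simp
      · rw [hg', Function.update_of_ne hy]; simp [hy]
    have hfw' : fibF g' w = (fibF g w).erase v := by
      ext y
      rw [mem_fibF, Finset.mem_erase, mem_fibF]
      by_cases hy : y = v
      · subst hy
        rw [hg', Function.update_self]
        constructor
        · intro hc; exact absurd (Option.some.inj hc).symm hwu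
        · rintro ⟨hc, -⟩; exact absurd rfl hc
      · rw [hg', Function.update_of_ne hy]; simp [hy]
    have hfx' : ∀ x, x ≠ u → x ≠ w → fibF g' x = fibF g x := by
      intro x hxu hxw
      ext y
      rw [mem_fibF, mem_fibF]
      by_cases hy : y = v
      · subst hy
        rw [hg', Function.update_self, hgv]
        constructor
        · intro hc; exact absurd (Option.some.inj hc).symm hxu
        · intro hc; exact absurd (Option.some.inj hc).symm hxw
      · rw [hg', Function.update_of_ne hy]
    have hcu' : (fibF g' u).card = 2 := by
      rw [hfu', Finset.card_insert_of_notMem hvu, hcard]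
    have hsub : (Finset.univ.filter (fun x => (fibF g' x).card = 1)) ⊂
        (Finset.univ.filter (fun x => (fibF g x).card = 1)) := by
      rw [Finset.ssubset_def]
      constructor
      · intro x hx
        rw [Finset.mem_filter] at hx ⊢
        refine ⟨Finset.mem_univ _, ?_⟩
        rcases eq_or_ne x u with rfl | hxu
        · rw [hcu'] at hx; omega
        rcases eq_or_ne x w with rfl | hxw
        · exfalso
          have h1 : (fibF g x).card ≥ 1 := Finset.card_pos.2 ⟨v, hvw⟩
          have h2 := hx.2
          rw [hfw', Finset.card_erase_of_mem hvw] at h2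
          omega
        · rw [hfx' x hxu hxw] at hx; exact hx.2
      · intro hsub'
        have hu1 : u ∈ Finset.univ.filter (fun x => (fibF g x).card = 1) :=
          Finset.mem_filter.2 ⟨Finset.mem_univ _, hcard⟩
        have := Finset.mem_filter.1 (hsub' hu1)
        rw [hcu'] at this
        omega
    have hlt := Finset.card_lt_card hsub
    have := hmin g' hval'
    omega
  -- the produced data
  refine ⟨g, colL g, fun y x h => (hgV y).1 x h, ?_⟩
  intro u v hadj hpv
  have hpu : p u = true := by
    have := hp u v hadj
    rw [hpv] at this
    exact Bool.ne_false_iff.1 this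
  have hIchar : ∀ y : V, (∃ x, g y = some x ∧ (y = u ∨ y = v ∨ x = u ∨ x = v)) ↔
      (g y = some u ∨ y = v) := by
    intro y
    constructor
    · rintro ⟨x, hx, (rfl | rfl | rfl | rfl)⟩
      · have := ((hgV y).1 x hx).2
        rw [hpu] at this
        exact absurd this (by simp)
      · exact Or.inr rfl
      · exact Or.inl hx
      · have h1 := (hgV y).1 x hx
        have := hp x y h1.1
        rw [hpv, h1.2] at this
        exact absurd rfl this
    · rintro (h | rfl)
      · exact ⟨u, h, Or.inr (Or.inr (Or.inl rfl))⟩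
      · obtain ⟨x, hx⟩ := (hgV y).2 hpv ⟨u, hadj⟩
        exact ⟨x, hx, Or.inr (Or.inl rfl)⟩
  simp only [hIchar]
  obtain ⟨w, hgv⟩ := (hgV v).2 hpv ⟨u, hadj⟩
  rcases eq_or_ne w u with h | hwu
  · -- v is assigned to u
    rw [h] at hgv
    have hne : (fibF g u).Nonempty := ⟨v, mem_fibF.2 hgv⟩
    obtain ⟨x0, -, y0, ⟨hy1, hy2⟩, hyu⟩ := fiber_unique g u hne 1 (fun _ => by decide)
    refine ⟨x0, y0, ⟨Or.inl (mem_fibF.1 hy1), by rw [colL_eq (mem_fibF.1 hy1)]; exact hy2⟩, ?_⟩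
    rintro y ⟨(h1 | rfl), h2⟩
    · exact hyu y ⟨mem_fibF.2 h1, by rw [← colL_eq h1]; exact h2⟩
    · exact hyu y ⟨mem_fibF.2 hgv, by rw [← colL_eq hgv]; exact h2⟩
  · rcases (fibF g u).eq_empty_or_nonempty with hemp | hne
    · refine ⟨colL g v, v, ⟨Or.inr rfl, rfl⟩, ?_⟩
      rintro y ⟨(h1 | rfl), -⟩
      · exact absurd (mem_fibF.2 h1) (by rw [hemp]; simp)
      · rfl
    · have hγcond : (fibF g u).card = 1 → colL g v ≠ 0 := by
        intro h1
        have h2 := steal u v w hadj hpv hgv hwu h1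
        rw [colL_eq hgv, colOf, if_pos h2]
        split_ifs <;> decide
      obtain ⟨x0, hx0γ, y0, ⟨hy1, hy2⟩, hyu⟩ := fiber_unique g u hne (colL g v) hγcond
      refine ⟨x0, y0, ⟨Or.inl (mem_fibF.1 hy1), by rw [colL_eq (mem_fibF.1 hy1)]; exact hy2⟩, ?_⟩
      rintro y ⟨(h1 | rfl), h2⟩
      · exact hyu y ⟨mem_fibF.2 h1, by rw [← colL_eq h1]; exact h2⟩
      · exact absurd h2.symm hx0γ

lemma log_testBit {d : ℕ} (hd : d ≠ 0) : d.testBit (Nat.log 2 d) = true := by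
  have h1 : 2 ^ Nat.log 2 d ≤ d := Nat.pow_log_le_self 2 hd
  have h2 : d < 2 ^ (Nat.log 2 d + 1) := Nat.lt_pow_succ_log_self (by norm_num) d
  have hdiv : d / 2 ^ Nat.log 2 d = 1 := by
    refine Nat.div_eq_of_lt_le (by omega) ?_
    rw [pow_succ] at h2
    omega
  rw [Nat.testBit_eq_decide_div_mod_eq, hdiv]
  rfl

lemma bitne {m n : ℕ} (h : m ≠ n) :
    m.testBit (Nat.log 2 (m ^^^ n)) ≠ n.testBit (Nat.log 2 (m ^^^ n)) := by
  have hd : m ^^^ n ≠ 0 := fun hc => h (xor_eq_zero_iff.1 hc)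
  have htop := log_testBit hd
  rw [Nat.testBit_xor] at htop
  intro hc
  rw [hc] at htop
  simp at htop

lemma loglt {m n t : ℕ} (hm : m < 2 ^ t) (hn : n < 2 ^ t) (h : m ≠ n) :
    Nat.log 2 (m ^^^ n) < t := by
  have hd : m ^^^ n ≠ 0 := fun hc => h (xor_eq_zero_iff.1 hc)
  exact Nat.log_lt_of_lt_pow hd (Nat.xor_lt_two_pow hm hn)

/-- The final edge colouring, as a natural number, on ordered pairs. -/
noncomputable def FFn (φ : V → ℕ) (a : ℕ → V → Option V) (l : ℕ → V → Fin 3)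
    (u v : V) : ℕ :=
  if φ u = φ v then 0
  else if a (Nat.log 2 (φ u ^^^ φ v)) (if (φ u).testBit (Nat.log 2 (φ u ^^^ φ v)) then v else u)
      = some (if (φ u).testBit (Nat.log 2 (φ u ^^^ φ v)) then u else v) then
    1 + 3 * Nat.log 2 (φ u ^^^ φ v)
      + (l (Nat.log 2 (φ u ^^^ φ v)) (if (φ u).testBit (Nat.log 2 (φ u ^^^ φ v)) then v else u)).val
  else 0

lemma FFn_symm (φ : V → ℕ) (a : ℕ → V → Option V) (l : ℕ → V → Fin 3)
    (u v : V) : FFn φ a l u v = FFn φ a l v u := by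
  by_cases h : φ u = φ v
  · rw [FFn, FFn, if_pos h, if_pos h.symm]
  · have h' : φ v ≠ φ u := Ne.symm h
    have hb := bitne h
    rw [FFn, FFn, if_neg h, if_neg h']
    simp only [Nat.xor_comm (φ v) (φ u)]
    cases hu : (φ u).testBit (Nat.log 2 (φ u ^^^ φ v))
    · have hv : (φ v).testBit (Nat.log 2 (φ u ^^^ φ v)) = true := by
        rw [hu] at hb
        exact Bool.ne_false_iff.1 (Ne.symm hb)
      simp [hu, hv]
    · have hv : (φ v).testBit (Nat.log 2 (φ u ^^^ φ v)) = false := by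
        rw [hu] at hb
        cases hvv : (φ v).testBit (Nat.log 2 (φ u ^^^ φ v))
        · rfl
        · rw [hvv] at hb; exact absurd rfl hb
      simp [hu, hv]

/-- The final edge colouring. -/
noncomputable def FFc (t : ℕ) (φ : V → ℕ) (a : ℕ → V → Option V) (l : ℕ → V → Fin 3) :
    Sym2 V → Fin (3 * t + 1) :=
  fun e => ⟨(Sym2.lift ⟨fun u v => FFn φ a l u v, fun u v => FFn_symm φ a l u v⟩ e) % (3 * t + 1),
    Nat.mod_lt _ (by omega)⟩

lemma FFc_mk (t : ℕ) (φ : V → ℕ) (a : ℕ → V → Option V) (l : ℕ → V → Fin 3) (u v : V) :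
    FFc t φ a l s(u, v) = ⟨FFn φ a l u v % (3 * t + 1), Nat.mod_lt _ (by omega)⟩ := rfl

lemma assemble [Fintype V] [Nonempty V] (G : SimpleGraph V) (t : ℕ) (φ : V → ℕ)
    (hlt : ∀ v, φ v < 2 ^ t) (hproper : ∀ u v : V, G.Adj u v → φ u ≠ φ v) :
    ∃ c : Sym2 V → Fin (3 * t + 1), ∀ e ∈ G.edgeSet, CFSatisfies G c e := by
  have key : ∀ j : ℕ, ∃ (a : V → Option V) (l : V → Fin 3),
      (∀ y x, a y = some x →
        ((G.Adj x y ∧ Nat.log 2 (φ x ^^^ φ y) = j) ∧ (φ y).testBit j = false)) ∧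
      (∀ u v, (G.Adj u v ∧ Nat.log 2 (φ u ^^^ φ v) = j) → (φ v).testBit j = false →
        ∃ x0 : Fin 3, ∃! y : V,
          (∃ x, a y = some x ∧ (y = u ∨ y = v ∨ x = u ∨ x = v)) ∧ l y = x0) := by
    intro j
    let Bj : SimpleGraph V :=
      { Adj := fun u v => G.Adj u v ∧ Nat.log 2 (φ u ^^^ φ v) = j
        symm := by
          constructor
          rintro u v ⟨h1, h2⟩
          exact ⟨h1.symm, by rw [Nat.xor_comm]; exact h2⟩
        loopless := ⟨fun v h => G.loopless.irrefl v h.1⟩ }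
    have hpj : ∀ u v, Bj.Adj u v → ((φ u).testBit j : Bool) ≠ (φ v).testBit j := by
      rintro u v ⟨h1, h2⟩
      rw [← h2]
      exact bitne (hproper u v h1)
    exact bip Bj (fun w => (φ w).testBit j) hpj
  choose a l hval hCF using key
  refine ⟨FFc t φ a l, ?_⟩
  have claim : ∀ U W : V, G.Adj U W → (φ W).testBit (Nat.log 2 (φ U ^^^ φ W)) = false →
      CFSatisfies G (FFc t φ a l) s(U, W) := by
    intro U W hadj hWbit
    have hφne : φ U ≠ φ W := hproper _ _ hadj
    have hjt : Nat.log 2 (φ U ^^^ φ W) < t := loglt (hlt U) (hlt W) hφne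
    set j : ℕ := Nat.log 2 (φ U ^^^ φ W) with hjdef
    obtain ⟨x0, y0, ⟨⟨xc, hax, hshare⟩, hly⟩, huniq⟩ :=
      hCF j U W ⟨hadj, hjdef.symm⟩ hWbit
    have hv1 := (hval j y0 xc hax).1
    have hGyx : G.Adj xc y0 := hv1.1
    have hlvlyx : Nat.log 2 (φ xc ^^^ φ y0) = j := hv1.2
    have hybit : (φ y0).testBit j = false := (hval j y0 xc hax).2
    have hyxφ : φ y0 ≠ φ xc := hproper _ _ hGyx.symm
    have hlyx2 : Nat.log 2 (φ y0 ^^^ φ xc) = j := by rw [Nat.xor_comm]; exact hlvlyx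
    have hx03 := x0.isLt
    refine ⟨⟨1 + 3 * j + (x0 : ℕ), by omega⟩, s(y0, xc), ⟨?_, ?_, ?_⟩, ?_⟩
    · exact G.mem_edgeSet.2 hGyx.symm
    · rcases hshare with rfl | rfl | rfl | rfl
      · exact ⟨y0, by simp, by simp⟩
      · exact ⟨y0, by simp, by simp⟩
      · exact ⟨xc, by simp, by simp⟩
      · exact ⟨xc, by simp, by simp⟩
    · rw [FFc_mk, Fin.mk.injEq]
      have hFF : FFn φ a l y0 xc = 1 + 3 * j + (x0 : ℕ) := by
        rw [FFn, if_neg hyxφ]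
        simp only [hlyx2, hybit, Bool.false_eq_true, if_false]
        rw [if_pos hax, hly]
      rw [hFF]
      exact Nat.mod_eq_of_lt (by omega)
    · intro f
      induction f using Sym2.ind with
      | _ pp qq =>
      intro hf
      obtain ⟨hfE, ⟨z, hz1, hz2⟩, hfc⟩ := hf
      rw [SimpleGraph.mem_edgeSet] at hfE
      have hpqφ : φ pp ≠ φ qq := hproper _ _ hfE
      rw [FFc_mk, Fin.mk.injEq] at hfc
      rw [FFn, if_neg hpqφ] at hfc
      have hj2t : Nat.log 2 (φ pp ^^^ φ qq) < t := loglt (hlt pp) (hlt qq) hpqφ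
      rw [Sym2.mem_iff] at hz1 hz2
      cases hbp : (φ pp).testBit (Nat.log 2 (φ pp ^^^ φ qq))
      · -- pp is the leaf
        simp only [hbp, Bool.false_eq_true, if_false] at hfc
        by_cases hsome : a (Nat.log 2 (φ pp ^^^ φ qq)) pp = some qq
        · rw [if_pos hsome] at hfc
          have hl3 := (l (Nat.log 2 (φ pp ^^^ φ qq)) pp).isLt
          rw [Nat.mod_eq_of_lt (by omega)] at hfc
          have hj2j : Nat.log 2 (φ pp ^^^ φ qq) = j := by omega
          rw [hj2j] at hsome hfc
          have hlx : l j pp = x0 := Fin.ext (by omega)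
          have hOr : pp = U ∨ pp = W ∨ qq = U ∨ qq = W := by
            rcases hz1 with rfl | rfl
            · rcases hz2 with h | h
              · exact Or.inl h.symm
              · exact Or.inr (Or.inr (Or.inl h.symm))
            · rcases hz2 with h | h
              · exact Or.inr (Or.inl h.symm)
              · exact Or.inr (Or.inr (Or.inr h.symm))
          have hy0 : pp = y0 := huniq pp ⟨⟨qq, hsome, hOr⟩, hlx⟩
          have hxq : qq = xc := by
            rw [hy0] at hsome
            exact Option.some.inj (hsome.symm.trans hax)
          rw [hy0, hxq]
        · rw [if_neg hsome, Nat.zero_mod] at hfc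
          omega
      · -- qq is the leaf
        simp only [hbp, eq_self_iff_true, if_true] at hfc
        by_cases hsome : a (Nat.log 2 (φ pp ^^^ φ qq)) qq = some pp
        · rw [if_pos hsome] at hfc
          have hl3 := (l (Nat.log 2 (φ pp ^^^ φ qq)) qq).isLt
          rw [Nat.mod_eq_of_lt (by omega)] at hfc
          have hj2j : Nat.log 2 (φ pp ^^^ φ qq) = j := by omega
          rw [hj2j] at hsome hfc
          have hlx : l j qq = x0 := Fin.ext (by omega)
          have hOr : qq = U ∨ qq = W ∨ pp = U ∨ pp = W := by
            rcases hz1 with rfl | rfl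
            · rcases hz2 with h | h
              · exact Or.inr (Or.inr (Or.inl h.symm))
              · exact Or.inl h.symm
            · rcases hz2 with h | h
              · exact Or.inr (Or.inr (Or.inr h.symm))
              · exact Or.inr (Or.inl h.symm)
          have hy0 : qq = y0 := huniq qq ⟨⟨pp, hsome, hOr⟩, hlx⟩
          have hxq : pp = xc := by
            rw [hy0] at hsome
            exact Option.some.inj (hsome.symm.trans hax)
          rw [hy0, hxq]
          exact Sym2.eq_swap
        · rw [if_neg hsome, Nat.zero_mod] at hfc
          omega
  intro e he
  induction e using Sym2.ind with
  | _ u v =>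
  rw [SimpleGraph.mem_edgeSet] at he
  have hφne : φ u ≠ φ v := hproper u v he
  have hb := bitne hφne
  cases hbu : (φ u).testBit (Nat.log 2 (φ u ^^^ φ v))
  · have hj : Nat.log 2 (φ v ^^^ φ u) = Nat.log 2 (φ u ^^^ φ v) := by rw [Nat.xor_comm]
    have := claim v u he.symm (by rw [hj]; exact hbu)
    rwa [Sym2.eq_swap] at this
  · have hbv : (φ v).testBit (Nat.log 2 (φ u ^^^ φ v)) = false := by
      rw [hbu] at hb
      cases hvv : (φ v).testBit (Nat.log 2 (φ u ^^^ φ v))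
      · rfl
      · rw [hvv] at hb; exact absurd rfl hb
    exact claim u v he hbv

end CFProof

theorem cfChromIndex_le_three_clog_chromaticNumber_add_one {V : Type*} [Fintype V] [Nonempty V]
    (G : SimpleGraph V) (hNoIso : ∀ v : V, ∃ w : V, G.Adj v w) :
    cfChromIndex G ≤ 3 * Nat.clog 2 G.chromaticNumber.toNat + 1 := by
  classical
  obtain ⟨C⟩ : G.Colorable (2 ^ Nat.clog 2 G.chromaticNumber.toNat) :=
    G.colorable_chromaticNumber_of_fintype.mono (Nat.le_pow_clog (by norm_num) _)
  obtain ⟨c, hc⟩ := CFProof.assemble G (Nat.clog 2 G.chromaticNumber.toNat)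
    (fun v => (C v).val) (fun v => (C v).isLt)
    (fun u v h hc' => C.valid h (Fin.ext hc'))
  exact Nat.sInf_le ⟨c, hc⟩
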